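/- Let q ≥ 3 be an integer and let β ≥ 0. Then D_β(x) < 0 for all x ∈ (1/q, 1] if and only if β < β_s(q). -/

import Mathlib

/-- The drift function `D_β(x) = −x + (1 + (q−1) e^{2β(1−qx)/(q−1)})⁻¹`,
equivalently `−x + e^{2βx}/(e^{2βx} + (q−1)e^{2β(1−x)/(q−1)})`. -/
noncomputable def Dfun (q : ℕ) (β x : ℝ) : ℝ :=
  -x + (1 + ((q : ℝ) - 1) * Real.exp (2 * β * (1 - (q : ℝ) * x) / ((q : ℝ) - 1)))⁻¹

/-- The dynamical (spinodal) critical inverse temperature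
`β_s(q) = sup {β ≥ 0 : D_β(x) ≠ 0 for all x ∈ (1/q,1)}`. -/
noncomputable def betaS (q : ℕ) : ℝ :=
  sSup {β : ℝ | 0 ≤ β ∧ ∀ x ∈ Set.Ioo (1 / (q : ℝ)) 1, Dfun q β x ≠ 0}

open Real Set

noncomputable def phi (q : ℕ) (x : ℝ) : ℝ :=
  ((q:ℝ) - 1) * Real.log (((q:ℝ) - 1) * x / (1 - x)) / (2 * ((q:ℝ) * x - 1))

lemma Dfun_phi {q : ℕ} (hq : 3 ≤ q) {x : ℝ} (hx : x ∈ Set.Ioo (1/(q:ℝ)) 1) :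
    Dfun q (phi q x) x = 0 := by
  have hQ3 : (3:ℝ) ≤ (q:ℝ) := by exact_mod_cast hq
  obtain ⟨hx1, hx2⟩ := hx
  have hQ0 : (0:ℝ) < q := by linarith
  have hx0 : 0 < x := lt_trans (by positivity) hx1
  have hQx : 1 < (q:ℝ) * x := by
    rw [div_lt_iff₀ hQ0] at hx1; linarith [hx1]
  have hQ1 : (0:ℝ) < (q:ℝ) - 1 := by linarith
  have h1x : 0 < 1 - x := by linarith
  have hne1 : ((q:ℝ) * x - 1) ≠ 0 := by linarith
  have hne2 : ((q:ℝ) - 1) ≠ 0 := by linarith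
  have hexp : 2 * phi q x * (1 - (q:ℝ) * x) / ((q:ℝ) - 1)
      = Real.log ((1 - x) / (((q:ℝ) - 1) * x)) := by
    have h2 : (1 - x) / (((q:ℝ)-1)*x) = (((q:ℝ)-1)*x/(1-x))⁻¹ := by
      rw [inv_div]
    rw [h2, Real.log_inv]
    unfold phi
    set L := Real.log (((q:ℝ) - 1) * x / (1 - x)) with hL
    field_simp
    ring
  unfold Dfun
  rw [hexp, Real.exp_log (by positivity)]
  have : 1 + ((q:ℝ) - 1) * ((1 - x) / (((q:ℝ) - 1) * x)) = 1 / x := by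
    field_simp
    ring
  rw [this, one_div, inv_inv]
  ring

lemma strictMono_D {q : ℕ} (hq : 3 ≤ q) {x : ℝ} (hx : x ∈ Set.Ioo (1/(q:ℝ)) 1) :
    StrictMono (fun β => Dfun q β x) := by
  have hQ3 : (3:ℝ) ≤ (q:ℝ) := by exact_mod_cast hq
  obtain ⟨hx1, hx2⟩ := hx
  have hQ0 : (0:ℝ) < q := by linarith
  have hQx : 1 < (q:ℝ) * x := by
    rw [div_lt_iff₀ hQ0] at hx1; linarith [hx1]
  have hQ1 : (0:ℝ) < (q:ℝ) - 1 := by linarith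
  intro b1 b2 hb
  have hc : 2 * (1 - (q:ℝ)*x) / ((q:ℝ) - 1) < 0 := by
    apply div_neg_of_neg_of_pos (by linarith) hQ1
  have ht : 2 * b2 * (1 - (q:ℝ) * x) / ((q:ℝ) - 1) < 2 * b1 * (1 - (q:ℝ) * x) / ((q:ℝ) - 1) := by
    have e1 : ∀ b : ℝ, 2 * b * (1 - (q:ℝ) * x) / ((q:ℝ) - 1)
        = b * (2 * (1 - (q:ℝ)*x) / ((q:ℝ) - 1)) := by intro b; ring
    rw [e1, e1]
    exact mul_lt_mul_of_neg_right hb hc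
  have hE : Real.exp (2 * b2 * (1 - (q:ℝ) * x) / ((q:ℝ) - 1))
      < Real.exp (2 * b1 * (1 - (q:ℝ) * x) / ((q:ℝ) - 1)) := Real.exp_lt_exp.2 ht
  show Dfun q b1 x < Dfun q b2 x
  unfold Dfun
  have h0 : 0 < 1 + ((q:ℝ) - 1) * Real.exp (2 * b2 * (1 - (q:ℝ) * x) / ((q:ℝ) - 1)) := by
    positivity
  have := inv_strictAnti₀ h0 (by nlinarith : 1 + ((q:ℝ) - 1) * Real.exp (2 * b2 * (1 - (q:ℝ) * x) / ((q:ℝ) - 1)) < 1 + ((q:ℝ) - 1) * Real.exp (2 * b1 * (1 - (q:ℝ) * x) / ((q:ℝ) - 1)))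
  linarith

lemma Dfun_neg_iff {q : ℕ} (hq : 3 ≤ q) {x : ℝ} (hx : x ∈ Set.Ioo (1/(q:ℝ)) 1) (β : ℝ) :
    Dfun q β x < 0 ↔ β < phi q x := by
  conv_lhs => rw [← Dfun_phi hq hx]
  exact (strictMono_D hq hx).lt_iff_lt

lemma Dfun_ne_iff {q : ℕ} (hq : 3 ≤ q) {x : ℝ} (hx : x ∈ Set.Ioo (1/(q:ℝ)) 1) (β : ℝ) :
    Dfun q β x ≠ 0 ↔ β ≠ phi q x := by
  conv_lhs => rw [← Dfun_phi hq hx]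
  exact (strictMono_D hq hx).injective.ne_iff

lemma phi_lb1 {q : ℕ} (hq : 3 ≤ q) {x : ℝ} (hx : x ∈ Set.Ioo (1/(q:ℝ)) 1) :
    1 / (2 * x) ≤ phi q x := by
  have hQ3 : (3:ℝ) ≤ (q:ℝ) := by exact_mod_cast hq
  obtain ⟨hx1, hx2⟩ := hx
  have hQ0 : (0:ℝ) < q := by linarith
  have hx0 : 0 < x := lt_trans (by positivity) hx1
  have hQx : 1 < (q:ℝ) * x := by rw [div_lt_iff₀ hQ0] at hx1; linarith
  have hQ1 : (0:ℝ) < (q:ℝ) - 1 := by linarith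
  have h1x : 0 < 1 - x := by linarith
  have hr : 0 < ((q:ℝ) - 1) * x / (1 - x) := by positivity
  -- log r ≥ 1 - 1/r
  have hlog : 1 - (((q:ℝ) - 1) * x / (1 - x))⁻¹ ≤ Real.log (((q:ℝ) - 1) * x / (1 - x)) := by
    have h := Real.log_le_sub_one_of_pos (x := (((q:ℝ) - 1) * x / (1 - x))⁻¹) (by positivity)
    rw [Real.log_inv] at h
    linarith
  have hinv : (((q:ℝ) - 1) * x / (1 - x))⁻¹ = (1 - x) / (((q:ℝ) - 1) * x) := by
    rw [inv_div]
  rw [hinv] at hlog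
  have hL : ((q:ℝ) * x - 1) / (((q:ℝ) - 1) * x) ≤ Real.log (((q:ℝ) - 1) * x / (1 - x)) := by
    have : 1 - (1 - x) / (((q:ℝ) - 1) * x) = ((q:ℝ) * x - 1) / (((q:ℝ) - 1) * x) := by
      field_simp; ring
    linarith [this ▸ hlog]
  unfold phi
  rw [div_le_div_iff₀ (by positivity) (by linarith)]
  calc 1 * (2 * ((q:ℝ) * x - 1)) = (2 * x) * (((q:ℝ) - 1) * (((q:ℝ) * x - 1) / (((q:ℝ) - 1) * x))) := by
        field_simp
    _ ≤ (2 * x) * (((q:ℝ) - 1) * Real.log (((q:ℝ) - 1) * x / (1 - x))) := by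
        have := mul_le_mul_of_nonneg_left hL (le_of_lt hQ1)
        nlinarith
    _ = ((q:ℝ) - 1) * Real.log (((q:ℝ) - 1) * x / (1 - x)) * (2 * x) := by ring

lemma phi_lb2 {q : ℕ} (hq : 3 ≤ q) {x : ℝ} (hx : x ∈ Set.Ioo (1/(q:ℝ)) 1) :
    Real.log (x / (1 - x)) / 2 ≤ phi q x := by
  have hQ3 : (3:ℝ) ≤ (q:ℝ) := by exact_mod_cast hq
  have hb1 := phi_lb1 hq hx
  obtain ⟨hx1, hx2⟩ := hx
  have hQ0 : (0:ℝ) < q := by linarith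
  have hx0 : 0 < x := lt_trans (by positivity) hx1
  have hQx : 1 < (q:ℝ) * x := by rw [div_lt_iff₀ hQ0] at hx1; linarith
  have hQ1 : (0:ℝ) < (q:ℝ) - 1 := by linarith
  have h1x : 0 < 1 - x := by linarith
  rcases le_or_gt (Real.log (x / (1 - x))) 0 with hc | hc
  · have : 0 < 1 / (2 * x) := by positivity
    linarith
  · have h1 : Real.log (x / (1 - x)) ≤ Real.log (((q:ℝ) - 1) * x / (1 - x)) := by
      apply Real.log_le_log (by positivity)
      gcongr
      nlinarith
    have h2 : 1/2 ≤ ((q:ℝ) - 1) / (2 * ((q:ℝ) * x - 1)) := by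
      rw [div_le_div_iff₀ (by norm_num) (by linarith)]
      nlinarith
    have hrw : phi q x = Real.log (((q:ℝ) - 1) * x / (1 - x)) * (((q:ℝ) - 1) / (2 * ((q:ℝ) * x - 1))) := by
      unfold phi; ring
    rw [hrw, div_eq_mul_inv (Real.log (x / (1 - x))) 2]
    have : (2:ℝ)⁻¹ = 1/2 := by norm_num
    rw [this]
    apply mul_le_mul h1 h2 (by norm_num) (by linarith)

lemma key_ineq {Q : ℝ} (hQ3 : 3 ≤ Q) :
    (Q - 1) * (2 * Real.log 2 + ((Q - 1) / (2 * (Q - 2)) - 1)) < Q := by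
  have hd : (0:ℝ) < Q - 2 := by linarith
  have hl2 : Real.log 2 < 0.6931471808 := Real.log_two_lt_d9
  have hu : (Q - 1) / (2 * (Q - 2)) * (2 * (Q - 2)) = Q - 1 := by
    field_simp
  have hupos : 0 < (Q - 1) / (2 * (Q - 2)) := div_pos (by linarith) (by linarith)
  set u := (Q - 1) / (2 * (Q - 2)) with hudef
  nlinarith [mul_nonneg (by linarith : (0:ℝ) ≤ Q - 3) (by nlinarith : (0:ℝ) ≤ (3 - 4*Real.log 2)*Q + 1), Real.log_pos (by norm_num : (1:ℝ) < 2), mul_pos hd hupos]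

lemma phi_two_div {q : ℕ} (hq : 3 ≤ q) : phi q (2/(q:ℝ)) < (q:ℝ)/2 := by
  have hQ3 : (3:ℝ) ≤ (q:ℝ) := by exact_mod_cast hq
  have hQ0 : (0:ℝ) < q := by linarith
  have hQne : (q:ℝ) ≠ 0 := ne_of_gt hQ0
  have hd : (0:ℝ) < (q:ℝ) - 2 := by linarith
  have ha : (q:ℝ) * (2/(q:ℝ)) = 2 := by field_simp
  have harg : ((q:ℝ)-1) * (2/(q:ℝ)) / (1 - 2/(q:ℝ)) = 2*((q:ℝ)-1)/((q:ℝ)-2) := by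
    rw [show (1 : ℝ) - 2/(q:ℝ) = ((q:ℝ)-2)/(q:ℝ) by field_simp]
    rw [mul_div_assoc', div_div_div_eq]
    rw [div_eq_div_iff (by positivity) (by linarith)]
    ring
  have hsplit : 2*((q:ℝ)-1)/((q:ℝ)-2) = 4 * (((q:ℝ)-1)/(2*((q:ℝ)-2))) := by
    field_simp; ring
  have hlogle : Real.log (2*((q:ℝ)-1)/((q:ℝ)-2))
      ≤ 2 * Real.log 2 + (((q:ℝ)-1)/(2*((q:ℝ)-2)) - 1) := by
    rw [hsplit, Real.log_mul (by norm_num) (ne_of_gt (div_pos (by linarith) (by linarith)))]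
    have h4 : Real.log 4 = 2 * Real.log 2 := by
      rw [show (4:ℝ) = 2^2 by norm_num, Real.log_pow]; push_cast; ring
    rw [h4]
    have := Real.log_le_sub_one_of_pos (x := ((q:ℝ)-1)/(2*((q:ℝ)-2))) (div_pos (by linarith) (by linarith))
    linarith
  have hkey := key_ineq hQ3
  unfold phi
  rw [ha, harg]
  have hml := mul_le_mul_of_nonneg_left hlogle (by linarith : (0:ℝ) ≤ (q:ℝ)-1)
  have : (2:ℝ) * (2 - 1) = 2 := by norm_num
  rw [this]
  rw [div_lt_div_iff₀ (by norm_num) (by norm_num)]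
  nlinarith

lemma frac_lt_one {t : ℝ} (ht : 1 < t) : t/(1+t) < 1 := by
  rw [div_lt_one (by linarith)]; linarith

lemma half_lt_frac {t : ℝ} (ht : 1 < t) : 1/2 < t/(1+t) := by
  rw [div_lt_div_iff₀ (by norm_num) (by linarith)]; linarith

lemma frac_ratio {t : ℝ} (ht : 1 < t) : (t/(1+t))/(1 - t/(1+t)) = t := by
  have h1 : (0:ℝ) < 1 + t := by linarith
  have h2 : 1 - t/(1+t) = 1/(1+t) := by field_simp; ring
  rw [h2]
  field_simp

lemma phi_contOn {q : ℕ} (hq : 3 ≤ q) :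
    ContinuousOn (phi q) (Set.Ioo (1/(q:ℝ)) 1) := by
  have hQ3 : (3:ℝ) ≤ (q:ℝ) := by exact_mod_cast hq
  have hQ0 : (0:ℝ) < q := by linarith
  have hfacts : ∀ x ∈ Set.Ioo (1/(q:ℝ)) 1, 0 < x ∧ x < 1 ∧ 1 < (q:ℝ)*x := by
    intro x hx
    obtain ⟨hx1, hx2⟩ := hx
    have hx0 : 0 < x := lt_trans (by positivity) hx1
    have hQx : 1 < (q:ℝ) * x := by rw [div_lt_iff₀ hQ0] at hx1; linarith
    exact ⟨hx0, hx2, hQx⟩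
  have hc1 : ContinuousOn (fun x:ℝ => ((q:ℝ)-1)*x/(1-x)) (Set.Ioo (1/(q:ℝ)) 1) := by
    apply ContinuousOn.div (by fun_prop) (by fun_prop)
    intro x hx
    obtain ⟨h0, h1, _⟩ := hfacts x hx
    intro h; linarith [sub_eq_zero.1 h]
  have hc2 : ContinuousOn (fun x:ℝ => Real.log (((q:ℝ)-1)*x/(1-x))) (Set.Ioo (1/(q:ℝ)) 1) := by
    apply ContinuousOn.log hc1
    intro x hx
    obtain ⟨h0, h1, _⟩ := hfacts x hx
    have : 0 < ((q:ℝ)-1)*x/(1-x) := by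
      apply div_pos (by nlinarith) (by linarith)
    exact ne_of_gt this
  unfold phi
  apply ContinuousOn.div (continuousOn_const.mul hc2) (by fun_prop)
  intro x hx
  obtain ⟨h0, h1, hQx⟩ := hfacts x hx
  intro h; nlinarith

lemma exists_min {q : ℕ} (hq : 3 ≤ q) :
    ∃ x0 ∈ Set.Ioo (1/(q:ℝ)) 1, ∀ x ∈ Set.Ioo (1/(q:ℝ)) 1, phi q x0 ≤ phi q x := by
  have hQ3 : (3:ℝ) ≤ (q:ℝ) := by exact_mod_cast hq
  have hQ0 : (0:ℝ) < q := by linarith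
  set a : ℝ := 2/(q:ℝ) with hadef
  have ha : a ∈ Set.Ioo (1/(q:ℝ)) 1 := by
    constructor
    · rw [div_lt_div_iff₀ hQ0 hQ0]; linarith
    · rw [div_lt_one hQ0]; linarith
  have hpa_lb : 1/(2*a) ≤ phi q a := phi_lb1 hq ha
  have h2a : 2*a = 4/(q:ℝ) := by rw [hadef]; ring
  have h1_2a : 1/(2*a) = (q:ℝ)/4 := by rw [h2a]; field_simp
  have hpa_pos : 0 < phi q a := lt_of_lt_of_le (by rw [h1_2a]; positivity) hpa_lb
  have hpa_ub : phi q a < (q:ℝ)/2 := phi_two_div hq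
  set pa := phi q a with hpadef
  set lo : ℝ := 1/(2*pa) with hlodef
  have hlo_pos : 0 < lo := by positivity
  have hlo_gt : 1/(q:ℝ) < lo := by
    rw [hlodef, div_lt_div_iff₀ hQ0 (by positivity)]
    nlinarith
  have hlo_le_a : lo ≤ a := by
    rw [hlodef, div_le_iff₀ (by positivity)]
    have ha_pos : 0 < a := by rw [hadef]; positivity
    have haq : a * (q:ℝ) = 2 := by rw [hadef]; field_simp
    nlinarith [mul_nonneg ha_pos.le (sub_nonneg.2 hpa_lb), haq]
  set t0 : ℝ := Real.exp (2*pa) with ht0def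
  have ht0 : 1 < t0 := by
    rw [ht0def]
    have := Real.add_one_le_exp (2*pa)
    nlinarith
  set hi : ℝ := t0/(1+t0) with hhidef
  have hhi1 : hi < 1 := frac_lt_one ht0
  set B : ℝ := max hi a with hBdef
  have hB1 : B < 1 := max_lt hhi1 ha.2
  have haB : a ≤ B := le_max_right _ _
  have hloB : lo ≤ B := le_trans hlo_le_a haB
  have hKsub : Set.Icc lo B ⊆ Set.Ioo (1/(q:ℝ)) 1 := by
    intro x hx
    exact ⟨lt_of_lt_of_le hlo_gt hx.1, lt_of_le_of_lt hx.2 hB1⟩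
  obtain ⟨x0, hx0K, hmin⟩ := isCompact_Icc.exists_isMinOn ⟨a, hlo_le_a, haB⟩
    ((phi_contOn hq).mono hKsub)
  refine ⟨x0, hKsub hx0K, ?_⟩
  intro x hx
  have hmin' := isMinOn_iff.1 hmin
  have hx0pa : phi q x0 ≤ pa := hmin' a ⟨hlo_le_a, haB⟩
  by_cases hxK : x ∈ Set.Icc lo B
  · exact hmin' x hxK
  · have hx0' : 0 < x := lt_trans (by positivity) hx.1
    rcases lt_or_ge x lo with hlt | hge
    · -- x < lo
      have h1 : pa < 1/(2*x) := by
        rw [hlodef] at hlt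
        rw [lt_div_iff₀ (by positivity)]
        rw [lt_div_iff₀ (by positivity)] at hlt
        nlinarith
      linarith [phi_lb1 hq hx]
    · -- B < x
      have hgt : B < x := lt_of_not_ge (fun h => hxK ⟨hge, h⟩)
      have hhix : hi < x := lt_of_le_of_lt (le_max_left _ _) hgt
      have h1x : 0 < 1 - x := by linarith [hx.2]
      have h1hi : 0 < 1 - hi := by linarith
      have hratio : t0 < x/(1-x) := by
        rw [← frac_ratio ht0, ← hhidef]
        rw [div_lt_div_iff₀ h1hi h1x]
        nlinarith
      have hlog : 2*pa < Real.log (x/(1-x)) := by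
        have := Real.log_lt_log (by positivity : (0:ℝ) < t0) hratio
        rw [ht0def, Real.log_exp] at this
        linarith
      linarith [phi_lb2 hq hx]

lemma phi_unbounded {q : ℕ} (hq : 3 ≤ q) (β : ℝ) (hβ : 0 ≤ β) :
    ∃ x ∈ Set.Ioo (1/(q:ℝ)) 1, β < phi q x := by
  have hQ3 : (3:ℝ) ≤ (q:ℝ) := by exact_mod_cast hq
  have hQ0 : (0:ℝ) < q := by linarith
  set t : ℝ := Real.exp (2*β + 2) with htdef
  have ht : 1 < t := by
    have := Real.add_one_le_exp (2*β + 2)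
    nlinarith
  refine ⟨t/(1+t), ⟨?_, frac_lt_one ht⟩, ?_⟩
  · calc 1/(q:ℝ) ≤ 1/3 := by
          rw [div_le_div_iff₀ hQ0 (by norm_num)]; linarith
      _ < 1/2 := by norm_num
      _ < t/(1+t) := half_lt_frac ht
  · have hmem : t/(1+t) ∈ Set.Ioo (1/(q:ℝ)) 1 := by
      refine ⟨?_, frac_lt_one ht⟩
      calc 1/(q:ℝ) ≤ 1/3 := by
            rw [div_le_div_iff₀ hQ0 (by norm_num)]; linarith
        _ < 1/2 := by norm_num
        _ < t/(1+t) := half_lt_frac ht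
    have := phi_lb2 hq hmem
    rw [frac_ratio ht, htdef, Real.log_exp] at this
    linarith

lemma Dfun_one_neg (q : ℕ) (hq : 3 ≤ q) (β : ℝ) :
    Dfun q β 1 < 0 := by
  unfold Dfun
  have hQ3 : (3:ℝ) ≤ (q:ℝ) := by exact_mod_cast hq
  have hE := Real.exp_pos (2 * β * (1 - (q : ℝ) * 1) / ((q : ℝ) - 1))
  have h1 : 1 < 1 + ((q:ℝ)-1) * Real.exp (2 * β * (1 - (q : ℝ) * 1) / ((q : ℝ) - 1)) := by
    nlinarith
  have h2 := inv_lt_one_of_one_lt₀ h1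
  linarith

/-- (Proposition 3.1, part 4): for `q ≥ 3` and `β ≥ 0`, `D_β(x) < 0` for all
`x ∈ (1/q,1]` if and only if `β < β_s(q)`. -/
theorem Dfun_neg_iff_lt_betaS (q : ℕ) (hq : 3 ≤ q) (β : ℝ) (hβ0 : 0 ≤ β) :
    (∀ x ∈ Set.Ioc (1 / (q : ℝ)) 1, Dfun q β x < 0) ↔ β < betaS q := by
  obtain ⟨x0, hx0, hmin⟩ := exists_min hq
  have hx00 : 0 < x0 := by
    have hQ3 : (3:ℝ) ≤ (q:ℝ) := by exact_mod_cast hq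
    exact lt_trans (by positivity) hx0.1
  have hm_pos : 0 < phi q x0 :=
    lt_of_lt_of_le (by positivity : (0:ℝ) < 1/(2*x0)) (phi_lb1 hq hx0)
  have hset : {b : ℝ | 0 ≤ b ∧ ∀ x ∈ Set.Ioo (1/(q:ℝ)) 1, Dfun q b x ≠ 0}
      = Set.Ico 0 (phi q x0) := by
    ext b
    simp only [Set.mem_setOf_eq, Set.mem_Ico]
    constructor
    · rintro ⟨hb0, hb⟩
      refine ⟨hb0, ?_⟩
      by_contra hle
      push_neg at hle
      have hne : b ≠ phi q x0 := (Dfun_ne_iff hq hx0 b).1 (hb x0 hx0)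
      have hlt : phi q x0 < b := lt_of_le_of_ne hle (Ne.symm hne)
      obtain ⟨x1, hx1, hbx1⟩ := phi_unbounded hq b hb0
      have hsub : Set.uIcc x0 x1 ⊆ Set.Ioo (1/(q:ℝ)) 1 :=
        (Set.ordConnected_Ioo).uIcc_subset hx0 hx1
      have hcont := (phi_contOn hq).mono hsub
      have hmem : b ∈ Set.uIcc (phi q x0) (phi q x1) := by
        rw [Set.mem_uIcc]; left; exact ⟨hlt.le, hbx1.le⟩
      obtain ⟨x2, hx2, hx2b⟩ := intermediate_value_uIcc hcont hmem
      exact (hb x2 (hsub hx2)) (hx2b ▸ Dfun_phi hq (hsub hx2))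
    · rintro ⟨hb0, hblt⟩
      exact ⟨hb0, fun x hx =>
        (Dfun_ne_iff hq hx b).2 (ne_of_lt (lt_of_lt_of_le hblt (hmin x hx)))⟩
  have hbetaS : betaS q = phi q x0 := by
    unfold betaS
    rw [hset]
    exact csSup_Ico hm_pos
  rw [hbetaS]
  constructor
  · intro h
    exact (Dfun_neg_iff hq hx0 β).1 (h x0 ⟨hx0.1, hx0.2.le⟩)
  · intro h x hx
    rcases eq_or_lt_of_le hx.2 with h1 | h1
    · subst h1
      exact Dfun_one_neg q hq β
    · exact (Dfun_neg_iff hq ⟨hx.1, h1⟩ β).2 (lt_of_lt_of_le h (hmin x ⟨hx.1, h1⟩))
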